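/- Under the hypotheses of the proportionality theorem (Broyden-class method with exact line search on the quadratic q, PCG iterations well defined, φ_i ≠ φ_i^c, s_iᵀAs_i ≠ 0 and y_iᵀH_iy_i ≠ 0 for i ≤ k, with d_k = γ_k d_k^{PCG}), the singular parameter value admits the closed form φ_k^c = −γ_k · (g_kᵀH₀g_k) / (g_{k+1}ᵀH₀g_{k+1}). -/

import Mathlib

open Matrix

private lemma vmv_mulVec {n : ℕ} (u v w : Fin n → ℝ) :
    vecMulVec u v *ᵥ w = (v ⬝ᵥ w) • u := by
  ext i
  simp [vecMulVec_apply, mulVec, dotProduct, Finset.mul_sum, mul_assoc, mul_comm, mul_left_comm]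

private lemma symm_dot {n : ℕ} {M : Matrix (Fin n) (Fin n) ℝ} (hM : M.IsSymm)
    (u v : Fin n → ℝ) : u ⬝ᵥ (M *ᵥ v) = v ⬝ᵥ (M *ᵥ u) := by
  rw [dotProduct_mulVec]; nth_rewrite 1 [← hM]; rw [vecMul_transpose, dotProduct_comm]

private lemma inv_symm {n : ℕ} {M : Matrix (Fin n) (Fin n) ℝ} (hM : M.IsSymm) :
    (M⁻¹).IsSymm := by
  rw [Matrix.IsSymm, transpose_nonsing_inv, hM]

private lemma broyden_det_step {n : ℕ} (H : Matrix (Fin n) (Fin n) ℝ) (hHs : H.IsSymm)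
    (hHu : IsUnit H.det) (s y : Fin n → ℝ) (φ : ℝ)
    (hσ : s ⬝ᵥ y ≠ 0) (hω : y ⬝ᵥ (H *ᵥ y) ≠ 0)
    (hφ : φ ≠ (y ⬝ᵥ s) ^ 2 / ((y ⬝ᵥ s) ^ 2 - (y ⬝ᵥ (H *ᵥ y)) * (s ⬝ᵥ (H⁻¹ *ᵥ s)))) :
    IsUnit (H + (1 / (s ⬝ᵥ y)) • vecMulVec s s
      - (1 / (y ⬝ᵥ (H *ᵥ y))) • vecMulVec (H *ᵥ y) (H *ᵥ y)
      + (φ * (y ⬝ᵥ (H *ᵥ y))) • vecMulVec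
          ((1/(s ⬝ᵥ y)) • s - (1/(y ⬝ᵥ (H *ᵥ y))) • (H *ᵥ y))
          ((1/(s ⬝ᵥ y)) • s - (1/(y ⬝ᵥ (H *ᵥ y))) • (H *ᵥ y))).det := by
  set σ := s ⬝ᵥ y with hσdef
  set ω := y ⬝ᵥ (H *ᵥ y) with hωdef
  set p := s ⬝ᵥ (H⁻¹ *ᵥ s) with hpdef
  set U : Matrix (Fin n) (Fin 2) ℝ := Matrix.of (fun i j => ![s i, (H *ᵥ y) i] j) with hU
  set C : Matrix (Fin 2) (Fin 2) ℝ :=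
    !![1/σ + φ*ω*(1/σ)*(1/σ), -(φ*ω*(1/σ)*(1/ω));
       -(φ*ω*(1/σ)*(1/ω)), -(1/ω) + φ*ω*(1/ω)*(1/ω)] with hC
  have hsplit : (H + (1 / σ) • vecMulVec s s
      - (1 / ω) • vecMulVec (H *ᵥ y) (H *ᵥ y)
      + (φ * ω) • vecMulVec ((1/σ) • s - (1/ω) • (H *ᵥ y)) ((1/σ) • s - (1/ω) • (H *ᵥ y)))
      = H + U * C * Uᵀ := by
    ext i j
    simp only [Matrix.add_apply, Matrix.sub_apply, Matrix.smul_apply, vecMulVec_apply,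
      Matrix.mul_apply, Fin.sum_univ_two, Matrix.transpose_apply, hU, hC, Matrix.of_apply,
      Matrix.cons_val', Matrix.cons_val_zero, Matrix.cons_val_one, Matrix.head_cons,
      Matrix.head_fin_const, Pi.sub_apply, Pi.smul_apply, smul_eq_mul,
      Matrix.cons_val_fin_one, Matrix.empty_val']
    ring
  rw [hsplit]
  have hfac : H + U * C * Uᵀ = H * (1 + H⁻¹ * (U * C * Uᵀ)) := by
    rw [mul_add, mul_one, ← mul_assoc, mul_nonsing_inv _ hHu, one_mul]
  have h1 : H⁻¹ *ᵥ (H *ᵥ y) = y := by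
    rw [mulVec_mulVec, nonsing_inv_mul _ hHu, one_mulVec]
  have hent : ∀ i j, (Uᵀ * (H⁻¹ * U)) i j
      = (fun a => U a i) ⬝ᵥ (H⁻¹ *ᵥ (fun b => U b j)) := by
    intro i j
    simp [Matrix.mul_apply, Matrix.transpose_apply, mulVec, dotProduct, Finset.mul_sum]
  have hK : Uᵀ * (H⁻¹ * U) = !![p, σ; σ, ω] := by
    ext i j
    rw [hent]
    fin_cases i <;> fin_cases j
    · show s ⬝ᵥ (H⁻¹ *ᵥ s) = p
      rfl
    · show s ⬝ᵥ (H⁻¹ *ᵥ (H *ᵥ y)) = σ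
      rw [h1]
    · show (H *ᵥ y) ⬝ᵥ (H⁻¹ *ᵥ s) = σ
      rw [symm_dot (inv_symm hHs), h1]
    · show (H *ᵥ y) ⬝ᵥ (H⁻¹ *ᵥ (H *ᵥ y)) = ω
      rw [h1, dotProduct_comm]
  rw [hfac, det_mul]
  have hassoc : H⁻¹ * (U * C * Uᵀ) = (H⁻¹ * U * C) * Uᵀ := by
    rw [← Matrix.mul_assoc, ← Matrix.mul_assoc]
  rw [hassoc, det_one_add_mul_comm, ← Matrix.mul_assoc, hK]
  have hys : y ⬝ᵥ s = σ := dotProduct_comm y s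
  rw [hys] at hφ
  have hnum : σ ^ 2 - φ * (σ ^ 2 - p * ω) ≠ 0 := by
    by_cases hz : σ ^ 2 - ω * p = 0
    · have : p * ω = σ ^ 2 := by linarith [hz]; 
      rw [this]
      simpa using pow_ne_zero 2 hσ
    · intro h0
      apply hφ
      rw [eq_div_iff hz]
      nlinarith [h0]
  have hval : (1 + !![p, σ; σ, ω] * C).det = (σ ^ 2 - φ * (σ ^ 2 - p * ω)) / (σ * ω) := by
    rw [det_fin_two]
    simp only [Matrix.add_apply, Matrix.one_apply, Matrix.mul_apply, Fin.sum_univ_two, hC,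
      Matrix.cons_val', Matrix.cons_val_zero, Matrix.cons_val_one, Matrix.head_cons,
      Matrix.empty_val', Matrix.cons_val_fin_one, Matrix.head_fin_const, Matrix.of_apply]
    simp only [if_true, if_neg (by decide : ¬((0:Fin 2) = 1)), if_neg (by decide : ¬((1:Fin 2) = 0)), eq_self_iff_true]
    field_simp
    ring
  rw [hval]
  rw [isUnit_iff_ne_zero]
  exact mul_ne_zero (hHu.ne_zero) (div_ne_zero hnum (mul_ne_zero hσ hω))

/-- Under the hypotheses of the proportionality theorem, the singular
value `φ_k^c` of the Broyden parameter admits the closed form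
`φ_k^c = -γ_k (g_kᵀH₀g_k)/(g_{k+1}ᵀH₀g_{k+1})`. -/
theorem broyden_phi_c_closed_form
    (n : ℕ) (A H0 : Matrix (Fin n) (Fin n) ℝ) (b x0 : Fin n → ℝ)
    (hA : A.IsSymm) (hH0 : H0.PosDef)
    (k : ℕ)
    -- PCG sequences
    (xC dC gC : ℕ → Fin n → ℝ)
    (hgC : ∀ i, gC i = A *ᵥ xC i - b)
    (hxC0 : xC 0 = x0)
    (hdC0 : dC 0 = -(H0 *ᵥ gC 0))
    (hdC : ∀ i, dC (i+1) = -(H0 *ᵥ gC (i+1)) +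
      ((gC (i+1) ⬝ᵥ (H0 *ᵥ gC (i+1))) / (gC i ⬝ᵥ (H0 *ᵥ gC i))) • dC i)
    (hxC : ∀ i, xC (i+1) = xC i +
      (-(gC i ⬝ᵥ dC i) / (dC i ⬝ᵥ (A *ᵥ dC i))) • dC i)
    -- PCG iterations 0,…,k are well defined
    (hwf1 : ∀ i, i ≤ k → gC i ⬝ᵥ (H0 *ᵥ gC i) ≠ 0)
    (hwf2 : ∀ i, i ≤ k → dC i ⬝ᵥ (A *ᵥ dC i) ≠ 0)
    -- Broyden-class method with exact line search
    (φ : ℕ → ℝ)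
    (xB dB sB yB gB : ℕ → Fin n → ℝ) (H : ℕ → Matrix (Fin n) (Fin n) ℝ)
    (hgB : ∀ i, gB i = A *ᵥ xB i - b)
    (hxB0 : xB 0 = x0)
    (hH00 : H 0 = H0)
    (hdB : ∀ i, dB i = -(H i *ᵥ gB i))
    (hxB : ∀ i, xB (i+1) = xB i +
      (-(gB i ⬝ᵥ dB i) / (dB i ⬝ᵥ (A *ᵥ dB i))) • dB i)
    (hsB : ∀ i, sB i = xB (i+1) - xB i)
    (hyB : ∀ i, yB i = A *ᵥ sB i)
    (hH : ∀ i, H (i+1) = H i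
      + (1 / (sB i ⬝ᵥ yB i)) • vecMulVec (sB i) (sB i)
      - (1 / (yB i ⬝ᵥ (H i *ᵥ yB i))) • vecMulVec (H i *ᵥ yB i) (H i *ᵥ yB i)
      + (φ i * (yB i ⬝ᵥ (H i *ᵥ yB i))) •
          vecMulVec
            ((1 / (sB i ⬝ᵥ yB i)) • sB i - (1 / (yB i ⬝ᵥ (H i *ᵥ yB i))) • (H i *ᵥ yB i))
            ((1 / (sB i ⬝ᵥ yB i)) • sB i - (1 / (yB i ⬝ᵥ (H i *ᵥ yB i))) • (H i *ᵥ yB i)))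
    -- conditions for i = 0,…,k
    (hphi : ∀ i, i ≤ k → φ i ≠ (yB i ⬝ᵥ sB i) ^ 2 /
      ((yB i ⬝ᵥ sB i) ^ 2 - (yB i ⬝ᵥ (H i *ᵥ yB i)) * (sB i ⬝ᵥ ((H i)⁻¹ *ᵥ sB i))))
    (hcurv : ∀ i, i ≤ k → sB i ⬝ᵥ (A *ᵥ sB i) ≠ 0)
    (hyHy : ∀ i, i ≤ k → yB i ⬝ᵥ (H i *ᵥ yB i) ≠ 0)
    (hg : ∀ i, i ≤ k → gB i ≠ 0)
    -- proportionality coefficients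
    (γ : ℕ → ℝ)
    (hcol : ∀ i, i ≤ k → dB i = γ i • dC i) :
    -- closed form for φ_k^c
    (yB k ⬝ᵥ sB k) ^ 2 /
      ((yB k ⬝ᵥ sB k) ^ 2 - (yB k ⬝ᵥ (H k *ᵥ yB k)) * (sB k ⬝ᵥ ((H k)⁻¹ *ᵥ sB k))) =
    -(γ k) * (gB k ⬝ᵥ (H0 *ᵥ gB k)) / (gB (k+1) ⬝ᵥ (H0 *ᵥ gB (k+1))) := by
  classical
  have hH0s : H0.IsSymm := by
    show _ = _
    ext i j
    have := congrFun (congrFun hH0.isHermitian.eq i) j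
    simpa using this
  -- gradient recurrences
  have hgCstep : ∀ i, gC (i+1) = gC i +
      (-(gC i ⬝ᵥ dC i) / (dC i ⬝ᵥ (A *ᵥ dC i))) • (A *ᵥ dC i) := by
    intro i
    rw [hgC, hxC i, mulVec_add, mulVec_smul, add_sub_right_comm, ← hgC]
  have hyg : ∀ i, yB i = gB (i+1) - gB i := by
    intro i
    rw [hyB, hsB, hgB, hgB, mulVec_sub]
    ext l; simp
  have hsd : ∀ i, sB i = (-(gB i ⬝ᵥ dB i) / (dB i ⬝ᵥ (A *ᵥ dB i))) • dB i := by
    intro i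
    rw [hsB, hxB, add_sub_cancel_left]
  -- g_i ⟂ d_i value
  have gdots_aux : ∀ t, (∀ u, u < t → gC t ⬝ᵥ dC u = 0) →
      gC t ⬝ᵥ dC t = -(gC t ⬝ᵥ (H0 *ᵥ gC t)) := by
    intro t ht
    cases t with
    | zero => rw [hdC0, dotProduct_neg]
    | succ t =>
      rw [hdC t, dotProduct_add, dotProduct_neg, dotProduct_smul,
        ht t (Nat.lt_succ_self t)]
      simp
  -- the fundamental PCG orthogonality facts
  have key : ∀ j, j ≤ k + 1 → ∀ j', j' ≤ j → ∀ i, i < j' →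
      gC j' ⬝ᵥ dC i = 0 ∧ gC j' ⬝ᵥ (H0 *ᵥ gC i) = 0 ∧
        (j' ≤ k → dC j' ⬝ᵥ (A *ᵥ dC i) = 0) := by
    intro j
    induction j with
    | zero => intro _ j' hj' i hi; exfalso; omega
    | succ j ih =>
      intro hj j' hj' i hi
      rcases Nat.lt_or_ge j' (j+1) with h | h
      · exact ih (by omega) j' (by omega) i hi
      · have hj'eq : j' = j + 1 := by omega
        subst hj'eq
        have hjk : j ≤ k := by omega
        have gd_aux : ∀ t, t ≤ j → gC t ⬝ᵥ dC t = -(gC t ⬝ᵥ (H0 *ᵥ gC t)) := by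
          intro t ht
          exact gdots_aux t (fun u hu => (ih (by omega) t (by omega) u hu).1)
        have ha : ∀ i, i < j + 1 → gC (j+1) ⬝ᵥ dC i = 0 := by
          intro i hi
          rw [hgCstep j, add_dotProduct, smul_dotProduct]
          rcases Nat.lt_or_ge i j with hij | hij
          · rw [(ih (by omega) j le_rfl i hij).1]
            have hADd : (A *ᵥ dC j) ⬝ᵥ dC i = 0 := by
              rw [dotProduct_comm, symm_dot hA]
              exact (ih (by omega) j le_rfl i hij).2.2 hjk
            rw [hADd]
            simp
          · have hij' : i = j := by omega
            subst hij'
            have h1 : (A *ᵥ dC i) ⬝ᵥ dC i = dC i ⬝ᵥ (A *ᵥ dC i) := dotProduct_comm _ _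
            have hτ := hwf2 i hjk
            rw [h1]
            simp only [smul_eq_mul]
            field_simp
            ring
          done
        have hb : ∀ i, i < j + 1 → gC (j+1) ⬝ᵥ (H0 *ᵥ gC i) = 0 := by
          intro i hi
          cases i with
          | zero =>
            have h0 : H0 *ᵥ gC 0 = -(dC 0) := by rw [hdC0, neg_neg]
            rw [h0, dotProduct_neg, ha 0 (by omega), neg_zero]
          | succ t =>
            have h0 : H0 *ᵥ gC (t+1) =
                ((gC (t+1) ⬝ᵥ (H0 *ᵥ gC (t+1))) / (gC t ⬝ᵥ (H0 *ᵥ gC t))) • dC t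
                  - dC (t+1) := by
              rw [hdC t]; ext l; simp
            rw [h0, dotProduct_sub, dotProduct_smul, ha t (by omega), ha (t+1) hi]
            simp
        refine ⟨ha i hi, hb i hi, ?_⟩
        intro hjk1
        have hρi : gC i ⬝ᵥ (H0 *ᵥ gC i) ≠ 0 := hwf1 i (by omega)
        have hτi : dC i ⬝ᵥ (A *ᵥ dC i) ≠ 0 := hwf2 i (by omega)
        have hgdi : gC i ⬝ᵥ dC i = -(gC i ⬝ᵥ (H0 *ᵥ gC i)) := gd_aux i (by omega)
        have hαi : -(gC i ⬝ᵥ dC i) / (dC i ⬝ᵥ (A *ᵥ dC i)) ≠ 0 := by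
          rw [hgdi, neg_neg]; exact div_ne_zero hρi hτi
        have hAd : (-(gC i ⬝ᵥ dC i) / (dC i ⬝ᵥ (A *ᵥ dC i))) • (A *ᵥ dC i)
            = gC (i+1) - gC i := by
          rw [hgCstep i]; ext l; simp
        rcases Nat.lt_or_ge i j with hij | hij
        · rw [hdC j, add_dotProduct, neg_dotProduct, smul_dotProduct,
            (ih (by omega) j le_rfl i hij).2.2 hjk]
          have hfirst : (H0 *ᵥ gC (j+1)) ⬝ᵥ (A *ᵥ dC i) = 0 := by
            have h2 : (-(gC i ⬝ᵥ dC i) / (dC i ⬝ᵥ (A *ᵥ dC i))) *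
                ((H0 *ᵥ gC (j+1)) ⬝ᵥ (A *ᵥ dC i)) = 0 := by
              rw [← smul_eq_mul, ← dotProduct_smul, hAd, dotProduct_sub]
              have e1 : (H0 *ᵥ gC (j+1)) ⬝ᵥ gC (i+1) = 0 := by
                rw [dotProduct_comm, symm_dot hH0s]
                exact hb (i+1) (by omega)
              have e2 : (H0 *ᵥ gC (j+1)) ⬝ᵥ gC i = 0 := by
                rw [dotProduct_comm, symm_dot hH0s]
                exact hb i (by omega)
              rw [e1, e2, sub_zero]
            exact (mul_eq_zero.mp h2).resolve_left hαi
          rw [hfirst]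
          simp
        · have hij' : i = j := by omega
          subst hij'
          have main : (-(gC i ⬝ᵥ dC i) / (dC i ⬝ᵥ (A *ᵥ dC i))) *
              (dC (i+1) ⬝ᵥ (A *ᵥ dC i)) = 0 := by
            rw [← smul_eq_mul, ← dotProduct_smul, hAd]
            rw [hdC i, add_dotProduct, neg_dotProduct, smul_dotProduct,
              dotProduct_sub, dotProduct_sub]
            have e1 : (H0 *ᵥ gC (i+1)) ⬝ᵥ gC (i+1)
                = gC (i+1) ⬝ᵥ (H0 *ᵥ gC (i+1)) := dotProduct_comm _ _
            have e2 : (H0 *ᵥ gC (i+1)) ⬝ᵥ gC i = 0 := by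
              rw [dotProduct_comm, symm_dot hH0s]
              exact hb i (by omega)
            have e3 : dC i ⬝ᵥ gC (i+1) = 0 := by
              rw [dotProduct_comm]
              exact ha i (by omega)
            have e4 : dC i ⬝ᵥ gC i = gC i ⬝ᵥ dC i := dotProduct_comm _ _
            rw [e1, e2, e3, e4, hgdi]
            simp only [smul_eq_mul]
            field_simp
            ring
          exact (mul_eq_zero.mp main).resolve_left hαi
  have gdots : ∀ i, i ≤ k → gC i ⬝ᵥ dC i = -(gC i ⬝ᵥ (H0 *ᵥ gC i)) := by
    intro i hi
    exact gdots_aux i (fun u hu => (key i (by omega) i le_rfl u hu).1)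
  -- well-definedness of the Broyden steps
  have hwell : ∀ i, i ≤ k → dB i ⬝ᵥ (A *ᵥ dB i) ≠ 0 ∧
      -(gB i ⬝ᵥ dB i) / (dB i ⬝ᵥ (A *ᵥ dB i)) ≠ 0 ∧ γ i ≠ 0 := by
    intro i hi
    have hcv := hcurv i hi
    rw [hsd i] at hcv
    rw [mulVec_smul, dotProduct_smul, smul_dotProduct] at hcv
    simp only [smul_eq_mul] at hcv
    have hc1 : -(gB i ⬝ᵥ dB i) / (dB i ⬝ᵥ (A *ᵥ dB i)) ≠ 0 := by
      intro h; exact hcv (by rw [h]; ring)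
    have hτ : dB i ⬝ᵥ (A *ᵥ dB i) ≠ 0 := by
      intro h; exact hcv (by rw [h]; ring)
    refine ⟨hτ, hc1, ?_⟩
    intro hγ0
    apply hτ
    rw [hcol i hi, hγ0, zero_smul]
    simp
  -- the two sequences coincide
  have seq : ∀ i, i ≤ k + 1 → xB i = xC i := by
    intro i
    induction i with
    | zero => intro _; rw [hxB0, hxC0]
    | succ i ih =>
      intro hi
      have hik : i ≤ k := by omega
      have hx : xB i = xC i := ih (by omega)
      have hgBCi : gB i = gC i := by rw [hgB, hgC, hx]
      obtain ⟨hτ, hα, hγ⟩ := hwell i hik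
      have hτC := hwf2 i hik
      rw [hxB i, hxC i, hx, hcol i hik, hgBCi,
        mulVec_smul, dotProduct_smul, dotProduct_smul, smul_dotProduct]
      ext l
      simp only [Pi.add_apply, Pi.smul_apply, smul_eq_mul]
      field_simp [hγ, hτC]
  have gBC : ∀ i, i ≤ k + 1 → gB i = gC i := by
    intro i hi; rw [hgB, hgC, seq i hi]
  -- symmetry of the H's
  have hvmvT : ∀ (u : Fin n → ℝ), (vecMulVec u u)ᵀ = vecMulVec u u := by
    intro u; ext i j; simp [vecMulVec_apply, mul_comm]
  have Hsymm : ∀ i, (H i).IsSymm := by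
    intro i
    induction i with
    | zero => rw [hH00]; exact hH0s
    | succ i ih =>
      have ih' : (H i)ᵀ = H i := ih
      show _ = _
      rw [hH i, transpose_add, transpose_sub, transpose_add, transpose_smul,
        transpose_smul, transpose_smul, hvmvT, hvmvT, hvmvT, ih']
  -- nonsingularity of the H's
  have Hinv : ∀ i, i ≤ k → IsUnit (H i).det := by
    intro i
    induction i with
    | zero => intro _; rw [hH00]; exact isUnit_iff_ne_zero.mpr hH0.det_pos.ne'
    | succ i ih =>
      intro hi
      rw [hH i]
      exact broyden_det_step (H i) (Hsymm i) (ih (by omega)) (sB i) (yB i) (φ i)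
        (by rw [hyB i]; exact hcurv i (by omega)) (hyHy i (by omega))
        (hphi i (by omega))
  -- H i acts as H0 on later gradients
  have HgB : ∀ m, m ≤ k → ∀ i, i ≤ m → H i *ᵥ gB (m+1) = H0 *ᵥ gB (m+1) := by
    intro m hm i
    induction i with
    | zero => intro _; rw [hH00]
    | succ i ih =>
      intro hi
      have hi' : i ≤ m := by omega
      have IH := ih hi'
      have hdg : dB i ⬝ᵥ gB (m+1) = 0 := by
        rw [hcol i (by omega), gBC (m+1) (by omega),
          smul_dotProduct (γ i) (dC i) (gC (m+1)), dotProduct_comm (dC i),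
          (key (m+1) (by omega) (m+1) le_rfl i (by omega)).1, smul_zero]
      have z1 : sB i ⬝ᵥ gB (m+1) = 0 := by
        rw [hsd i, smul_dotProduct _ (dB i) (gB (m+1)), hdg, smul_zero]
      have z2 : (H i *ᵥ yB i) ⬝ᵥ gB (m+1) = 0 := by
        rw [dotProduct_comm, symm_dot (Hsymm i), IH, hyg i, sub_dotProduct]
        have t1 : gB (i+1) ⬝ᵥ (H0 *ᵥ gB (m+1)) = 0 := by
          rw [symm_dot hH0s, gBC (m+1) (by omega), gBC (i+1) (by omega)]
          exact (key (m+1) (by omega) (m+1) le_rfl (i+1) (by omega)).2.1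
        have t2 : gB i ⬝ᵥ (H0 *ᵥ gB (m+1)) = 0 := by
          rw [symm_dot hH0s, gBC (m+1) (by omega), gBC i (by omega)]
          exact (key (m+1) (by omega) (m+1) le_rfl i (by omega)).2.1
        rw [t1, t2, sub_zero]
      have z3 : ((1 / (sB i ⬝ᵥ yB i)) • sB i -
          (1 / (yB i ⬝ᵥ (H i *ᵥ yB i))) • (H i *ᵥ yB i)) ⬝ᵥ gB (m+1) = 0 := by
        rw [sub_dotProduct, smul_dotProduct, smul_dotProduct, z1, z2]
        simp
      rw [hH i, add_mulVec, sub_mulVec, add_mulVec, smul_mulVec,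
        smul_mulVec, smul_mulVec, vmv_mulVec, vmv_mulVec, vmv_mulVec,
        z1, z2, z3, IH]
      simp
  -- final computation
  have gBk : gB k = gC k := gBC k (by omega)
  have gBk1 : gB (k+1) = gC (k+1) := gBC (k+1) le_rfl
  obtain ⟨hτ, hα, hγ⟩ := hwell k le_rfl
  have hdk := hcol k le_rfl
  have hρ : gB k ⬝ᵥ (H0 *ᵥ gB k) ≠ 0 := by
    rw [gBk]; exact hwf1 k le_rfl
  have e4 : gB k ⬝ᵥ dB k = -(γ k * (gB k ⬝ᵥ (H0 *ᵥ gB k))) := by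
    rw [gBk, hdk, dotProduct_smul, gdots k le_rfl]
    simp only [smul_eq_mul]
    ring
  have e3 : gB (k+1) ⬝ᵥ dB k = 0 := by
    rw [gBk1, hdk, dotProduct_smul,
      (key (k+1) le_rfl (k+1) le_rfl k (by omega)).1]
    simp
  have e2 : gB k ⬝ᵥ (H0 *ᵥ gB (k+1)) = 0 := by
    rw [symm_dot hH0s, gBk, gBk1]
    exact (key (k+1) le_rfl (k+1) le_rfl k (by omega)).2.1
  have hHgk : H k *ᵥ gB k = -(dB k) := by rw [hdB k, neg_neg]
  have hHgk1 : H k *ᵥ gB (k+1) = H0 *ᵥ gB (k+1) := HgB k le_rfl k le_rfl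
  have hsk := hsd k
  set a := -(gB k ⬝ᵥ dB k) / (dB k ⬝ᵥ (A *ᵥ dB k)) with hadef
  set c := γ k with hcdef
  set r := gB k ⬝ᵥ (H0 *ᵥ gB k) with hrdef
  set r' := gB (k+1) ⬝ᵥ (H0 *ᵥ gB (k+1)) with hr'def
  have haτ : a * (dB k ⬝ᵥ (A *ᵥ dB k)) = c * r := by
    rw [hadef, e4, neg_neg, div_mul_cancel₀ _ hτ]
  have hσv : yB k ⬝ᵥ sB k = a * (c * r) := by
    rw [hyB k, dotProduct_comm, hsk, mulVec_smul, dotProduct_smul,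
      smul_dotProduct]
    simp only [smul_eq_mul]
    rw [haτ]
  have hωv : yB k ⬝ᵥ (H k *ᵥ yB k) = r' + c * r := by
    rw [hyg k, mulVec_sub, hHgk1, hHgk, sub_dotProduct, dotProduct_sub,
      dotProduct_sub, dotProduct_neg, dotProduct_neg, e3, e2, e4, ← hr'def]
    ring
  have hpv : sB k ⬝ᵥ ((H k)⁻¹ *ᵥ sB k) = a * (a * (c * r)) := by
    have h5 : H k *ᵥ ((-a) • gB k) = sB k := by
      rw [mulVec_smul, hHgk, hsk, smul_neg, neg_smul, neg_neg]
    have hinvs : (H k)⁻¹ *ᵥ sB k = (-a) • gB k := by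
      rw [← h5, mulVec_mulVec, nonsing_inv_mul _ (Hinv k le_rfl), one_mulVec]
    rw [hinvs, dotProduct_smul, hsk, smul_dotProduct,
      dotProduct_comm (dB k) (gB k), e4]
    simp only [smul_eq_mul]
    ring
  rw [hσv, hωv, hpv]
  have ha0 : a ≠ 0 := hα
  have hc0 : c ≠ 0 := hγ
  rcases eq_or_ne r' 0 with h0 | h0
  · rw [h0]
    have hz : (a * (c * r)) ^ 2 - (0 + c * r) * (a * (a * (c * r))) = 0 := by ring
    rw [hz, div_zero, div_zero]
  · have hden : (a * (c * r)) ^ 2 - (r' + c * r) * (a * (a * (c * r)))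
        = -(a ^ 2 * c * r * r') := by ring
    rw [hden]
    field_simp [ha0, hc0, hρ, h0]
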